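/- arXiv:2001.09115 — 2 statements merged into one kernel-verified Lean document; each statement's English description precedes it below -/
import Mathlib

section
/- Let r_0 ≥ 32, n ≥ 1, and r_1, …, r_n ∈ ℝ with |r_k| ≥ r_0 for all k, and set L_k := T(r_k). Then |(1/n) log‖L_n ⋯ L_1‖ − (1/n) Σ_{k=1}^n log|r_k|| ≤ (1/n) log(|r_n| |r_1|) + 1.2·10³ · r_0^{−2}. -/
open scoped Matrix.Norms.L2Operator
open Matrix

/-- The Schrödinger transfer matrix `T(a)` with rows `(a, -1)` and `(1, 0)`. -/
noncomputable def transferM (a : ℝ) : Matrix (Fin 2) (Fin 2) ℝ := !![a, -1; 1, 0]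

/-- The ordered product `L (n-1) * ⋯ * L 1 * L 0`. -/
noncomputable def prodRev (L : ℕ → Matrix (Fin 2) (Fin 2) ℝ) (n : ℕ) :
    Matrix (Fin 2) (Fin 2) ℝ :=
  ((List.range n).reverse.map L).prod

noncomputable def aSeq (r : ℕ → ℝ) : ℕ → ℝ
  | 0 => 1
  | 1 => r 0
  | (k+2) => r (k+1) * aSeq r (k+1) - aSeq r k

noncomputable def cSeq (r : ℕ → ℝ) : ℕ → ℝ
  | 0 => 0
  | 1 => -1
  | (k+2) => r (k+1) * cSeq r (k+1) - cSeq r k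

lemma abs_sub_le' (x y : ℝ) : |x - y| ≤ |x| + |y| := by
  rw [sub_eq_add_neg, ← abs_neg y]; exact abs_add_le _ _

lemma prodRev_succ (L : ℕ → Matrix (Fin 2) (Fin 2) ℝ) (n : ℕ) :
    prodRev L (n+1) = L n * prodRev L n := by
  simp [prodRev, List.range_succ]

lemma prodRev_entries (r : ℕ → ℝ) : ∀ k : ℕ,
    prodRev (fun k => transferM (r k)) (k+1)
      = !![aSeq r (k+1), cSeq r (k+1); aSeq r k, cSeq r k] := by
  intro k
  induction k with
  | zero =>
    rw [prodRev_succ]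
    show transferM (r 0) * prodRev _ 0 = _
    rw [show prodRev (fun k => transferM (r k)) 0 = 1 from rfl, mul_one]
    simp [transferM, aSeq, cSeq]
  | succ k ih =>
    rw [prodRev_succ, ih]
    show transferM (r (k+1)) * _ = _
    rw [transferM]
    ext i j
    fin_cases i <;> fin_cases j <;>
      simp [Matrix.mul_apply, Fin.sum_univ_two, aSeq, cSeq] <;> ring

lemma det_ident (r : ℕ → ℝ) : ∀ k : ℕ,
    cSeq r (k+1) * aSeq r k - aSeq r (k+1) * cSeq r k = -1 := by
  intro k
  induction k with
  | zero => simp [aSeq, cSeq]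
  | succ k ih =>
    show (r (k+1) * cSeq r (k+1) - cSeq r k) * aSeq r (k+1)
        - (r (k+1) * aSeq r (k+1) - aSeq r k) * cSeq r (k+1) = -1
    linear_combination ih

lemma row_sq_le (a b x y M : ℝ) (hM : 0 ≤ M) (ha : |a| ≤ M) (hb : |b| ≤ M) :
    (a*x + b*y)^2 ≤ 2*M^2*(x^2+y^2) := by
  have h1 : a^2 ≤ M^2 := by nlinarith [sq_abs a, abs_nonneg a]
  have h2 : b^2 ≤ M^2 := by nlinarith [sq_abs b, abs_nonneg b]
  nlinarith [sq_nonneg (a*y - b*x), sq_nonneg x, sq_nonneg y]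

lemma opNorm_le_two_max (A : Matrix (Fin 2) (Fin 2) ℝ) (M : ℝ) (hM : 0 ≤ M)
    (h : ∀ i j, |A i j| ≤ M) : ‖A‖ ≤ 2 * M := by
  rw [Matrix.l2_opNorm_def]
  apply ContinuousLinearMap.opNorm_le_bound _ (by positivity)
  intro x
  have hx : ‖x‖ = Real.sqrt ((x 0)^2 + (x 1)^2) := by
    rw [EuclideanSpace.norm_eq, Fin.sum_univ_two]
    norm_num [sq_abs]
  have happ : ∀ i : Fin 2, ((Matrix.toEuclideanLin.trans LinearMap.toContinuousLinearMap A) x) i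
      = A i 0 * x 0 + A i 1 * x 1 := by
    intro i
    simp [Matrix.toEuclideanLin_apply, Matrix.mulVec, dotProduct, Fin.sum_univ_two]
    fin_cases i <;> rfl
  have hnx : ‖(Matrix.toEuclideanLin.trans LinearMap.toContinuousLinearMap A) x‖
      = Real.sqrt ((A 0 0 * x 0 + A 0 1 * x 1)^2 + (A 1 0 * x 0 + A 1 1 * x 1)^2) := by
    rw [EuclideanSpace.norm_eq, Fin.sum_univ_two, happ 0, happ 1]
    norm_num [sq_abs]
  rw [hnx, hx]
  rw [show (2*M) * Real.sqrt ((x 0)^2 + (x 1)^2)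
      = Real.sqrt ((2*M)^2 * ((x 0)^2 + (x 1)^2)) by
    rw [Real.sqrt_mul (by positivity), Real.sqrt_sq (by positivity)]]
  apply Real.sqrt_le_sqrt
  have e1 := row_sq_le (A 0 0) (A 0 1) (x 0) (x 1) M hM (h 0 0) (h 0 1)
  have e2 := row_sq_le (A 1 0) (A 1 1) (x 0) (x 1) M hM (h 1 0) (h 1 1)
  nlinarith [e1, e2]

lemma entry_le_opNorm (A : Matrix (Fin 2) (Fin 2) ℝ) (i j : Fin 2) : |A i j| ≤ ‖A‖ := by
  have h := Matrix.l2_opNorm_mulVec A (EuclideanSpace.single j (1:ℝ))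
  rw [EuclideanSpace.norm_single] at h
  simp only [norm_one, mul_one] at h
  refine le_trans ?_ h
  have hv : (EuclideanSpace.equiv (Fin 2) ℝ).symm (A *ᵥ (EuclideanSpace.single j (1:ℝ)))
      = (EuclideanSpace.equiv (Fin 2) ℝ).symm (fun i => A i j) := by
    congr 1
    rw [show (A *ᵥ (EuclideanSpace.single j (1:ℝ))) = A *ᵥ (Pi.single j 1) from rfl,
      Matrix.mulVec_single]
    simp
    rfl
  rw [hv, EuclideanSpace.norm_eq]
  rw [show |A i j| = Real.sqrt ((A i j)^2) from (Real.sqrt_sq_eq_abs _).symm]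
  apply Real.sqrt_le_sqrt
  fin_cases i <;> simp [Fin.sum_univ_two] <;>
    nlinarith [sq_nonneg (A 0 j), sq_nonneg (A 1 j), sq_abs (A 0 j), sq_abs (A 1 j)]

set_option maxHeartbeats 1000000 in
/-- **Asymptotics of the Lyapunov exponent off the spectrum** (Corollary 5.2, deterministic
form). For `|r_k| ≥ r₀ ≥ 32` and `L_k = T(r_k)`:
`|(1/n) log ‖L_n ⋯ L_1‖ - (1/n) ∑ log |r_k|| ≤ (1/n) log (|r_n| |r_1|) + 1.2·10³ r₀⁻²`. -/
theorem lyapunov_asymptotics_off_spectrum (r₀ : ℝ) (hr₀ : 32 ≤ r₀)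
    (n : ℕ) (hn : 1 ≤ n) (r : ℕ → ℝ) (hr : ∀ k < n, r₀ ≤ |r k|) :
    |(1 / n : ℝ) * Real.log ‖prodRev (fun k => transferM (r k)) n‖ -
        (1 / n : ℝ) * ∑ k ∈ Finset.range n, Real.log (abs (r k))| ≤
      (1 / n : ℝ) * Real.log (|r (n - 1)| * |r 0|) + 1.2 * 10 ^ 3 * r₀⁻¹ ^ 2 := by
  set δ : ℝ := (r₀ - 1)⁻¹ with hδdef
  set e : ℝ := 4 * r₀⁻¹ ^ 2 with hedef
  have hr₀pos : (0:ℝ) < r₀ := by linarith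
  have hr₀1 : (31:ℝ) ≤ r₀ - 1 := by linarith
  have hδpos : 0 < δ := by positivity
  have hδ1 : δ * (r₀ - 1) = 1 := inv_mul_cancel₀ (by linarith)
  have hδle : δ ≤ 2 * r₀⁻¹ := by
    rw [hδdef]
    rw [inv_le_iff_one_le_mul₀ (by linarith)]
    have h1 : r₀ * r₀⁻¹ = 1 := mul_inv_cancel₀ (ne_of_gt hr₀pos)
    have h2 : 0 < r₀⁻¹ := by positivity
    nlinarith
  have hepos : 0 < e := by positivity
  -- growth of |a|
  have hgrow : ∀ k, k < n → (r₀ - 1) * |aSeq r k| ≤ |aSeq r (k+1)| := by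
    intro k
    induction k with
    | zero =>
      intro hk
      have := hr 0 hk
      simp only [aSeq, abs_one, mul_one]
      linarith
    | succ k ih =>
      intro hk
      have hk' : k < n := by omega
      have h1 := ih hk'
      have hrk := hr (k+1) hk
      have hak : |aSeq r k| ≤ |aSeq r (k+1)| := by nlinarith [abs_nonneg (aSeq r k)]
      have heq : aSeq r (k+2) = r (k+1) * aSeq r (k+1) - aSeq r k := rfl
      rw [heq]
      have habs : |r (k+1)| * |aSeq r (k+1)| - |aSeq r k|
          ≤ |r (k+1) * aSeq r (k+1) - aSeq r k| := by
        rw [← abs_mul]; exact abs_sub_abs_le_abs_sub _ _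
      nlinarith [abs_nonneg (aSeq r (k+1))]
  have hposa : ∀ k, k ≤ n → (31:ℝ)^k ≤ |aSeq r k| := by
    intro k
    induction k with
    | zero => intro _; simp [aSeq]
    | succ k ih =>
      intro hk
      have h1 := ih (by omega)
      have h2 := hgrow k (by omega)
      have : (31:ℝ)^(k+1) = (r₀-1) * 31^k - (r₀ - 1 - 31) * 31^k := by ring
      nlinarith [pow_nonneg (by norm_num : (0:ℝ) ≤ 31) k, abs_nonneg (aSeq r k)]
  have hapos : ∀ k, k ≤ n → 0 < |aSeq r k| := by
    intro k hk
    exact lt_of_lt_of_le (by positivity) (hposa k hk)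
  -- per-step multiplicative bounds
  have hup : ∀ k, 1 ≤ k → k < n → |aSeq r (k+1)| ≤ (|r k| + δ) * |aSeq r k| := by
    intro k hk1 hkn
    cases k with
    | zero => omega
    | succ m =>
      have hg := hgrow m (by omega)
      have h3 : |aSeq r m| ≤ δ * |aSeq r (m+1)| := by
        nlinarith [mul_le_mul_of_nonneg_left hg (le_of_lt hδpos), hδ1, abs_nonneg (aSeq r m)]
      have heq : aSeq r (m+2) = r (m+1) * aSeq r (m+1) - aSeq r m := rfl
      rw [heq]
      calc |r (m+1) * aSeq r (m+1) - aSeq r m|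
          ≤ |r (m+1) * aSeq r (m+1)| + |aSeq r m| := abs_sub_le' _ _
        _ ≤ |r (m+1)| * |aSeq r (m+1)| + δ * |aSeq r (m+1)| := by
            rw [abs_mul]; linarith
        _ = (|r (m+1)| + δ) * |aSeq r (m+1)| := by ring
  have hlowstep : ∀ k, 1 ≤ k → k < n → (|r k| - δ) * |aSeq r k| ≤ |aSeq r (k+1)| := by
    intro k hk1 hkn
    cases k with
    | zero => omega
    | succ m =>
      have hg := hgrow m (by omega)
      have h3 : |aSeq r m| ≤ δ * |aSeq r (m+1)| := by
        nlinarith [mul_le_mul_of_nonneg_left hg (le_of_lt hδpos), hδ1, abs_nonneg (aSeq r m)]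
      have heq : aSeq r (m+2) = r (m+1) * aSeq r (m+1) - aSeq r m := rfl
      rw [heq]
      have habs : |r (m+1) * aSeq r (m+1)| - |aSeq r m|
          ≤ |r (m+1) * aSeq r (m+1) - aSeq r m| := abs_sub_abs_le_abs_sub _ _
      rw [abs_mul] at habs
      nlinarith
  -- log step bounds
  have hlog_up : ∀ x : ℝ, r₀ ≤ x → Real.log (x + δ) ≤ Real.log x + e := by
    intro x hx
    have hxpos : 0 < x := lt_of_lt_of_le hr₀pos hx
    have h1 : Real.log (x+δ) - Real.log x = Real.log ((x+δ)/x) := by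
      rw [Real.log_div (by positivity) (ne_of_gt hxpos)]
    have h2 : Real.log ((x+δ)/x) ≤ (x+δ)/x - 1 := Real.log_le_sub_one_of_pos (by positivity)
    have h3 : (x+δ)/x - 1 = δ/x := by field_simp; ring
    have h4 : δ/x ≤ e := by
      rw [div_le_iff₀ hxpos, hedef]
      have h5 : r₀ * r₀⁻¹ = 1 := mul_inv_cancel₀ (ne_of_gt hr₀pos)
      have h6 : 0 < r₀⁻¹ := by positivity
      nlinarith [mul_le_mul_of_nonneg_left hx (by positivity : (0:ℝ) ≤ 4 * r₀⁻¹^2)]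
    linarith
  have hlog_down : ∀ x : ℝ, r₀ ≤ x → Real.log x ≤ Real.log (x - δ) + e := by
    intro x hx
    have hxpos : 0 < x := lt_of_lt_of_le hr₀pos hx
    have hxδ : 0 < x - δ := by nlinarith
    have h1 : Real.log x - Real.log (x-δ) = Real.log (x/(x-δ)) := by
      rw [Real.log_div (ne_of_gt hxpos) (ne_of_gt hxδ)]
    have h2 : Real.log (x/(x-δ)) ≤ x/(x-δ) - 1 := Real.log_le_sub_one_of_pos (by positivity)
    have h3 : x/(x-δ) - 1 = δ/(x-δ) := by field_simp; ring
    have h4 : δ/(x-δ) ≤ e := by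
      rw [div_le_iff₀ hxδ, hedef]
      have h5 : r₀ * r₀⁻¹ = 1 := mul_inv_cancel₀ (ne_of_gt hr₀pos)
      have h6 : 0 < r₀⁻¹ := by positivity
      -- δ ≤ e * (x - δ): e(x-δ) ≥ e(r₀ - 1) = 4r₀⁻¹²(r₀-1) ≥ 2 r₀⁻¹ ≥ δ
      nlinarith [mul_le_mul_of_nonneg_left hx (by positivity : (0:ℝ) ≤ 4 * r₀⁻¹^2),
        mul_pos hepos hδpos]
    linarith
  -- log sum bounds
  have hUp : ∀ k, 1 ≤ k → k ≤ n →
      Real.log |aSeq r k| ≤ (∑ j ∈ Finset.range k, Real.log |r j|) + k * e := by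
    intro k hk
    induction k, hk using Nat.le_induction with
    | base =>
      intro _
      have : aSeq r 1 = r 0 := rfl
      rw [this, Finset.sum_range_one]
      push_cast
      linarith
    | succ k hk ih =>
      intro hk1n
      have hkn : k < n := by omega
      have h1 := hup k hk hkn
      have hpos1 : 0 < |aSeq r (k+1)| := hapos (k+1) hk1n
      have hposk : 0 < |aSeq r k| := hapos k (by omega)
      have hrk := hr k hkn
      have hl : Real.log |aSeq r (k+1)| ≤ Real.log ((|r k| + δ) * |aSeq r k|) :=
        Real.log_le_log hpos1 h1
      rw [Real.log_mul (by positivity) (ne_of_gt hposk)] at hl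
      have h2 := hlog_up (|r k|) hrk
      have h3 := ih (by omega)
      rw [Finset.sum_range_succ]
      push_cast
      linarith
  have hLo : ∀ k, 1 ≤ k → k ≤ n →
      (∑ j ∈ Finset.range k, Real.log |r j|) - k * e ≤ Real.log |aSeq r k| := by
    intro k hk
    induction k, hk using Nat.le_induction with
    | base =>
      intro _
      have : aSeq r 1 = r 0 := rfl
      rw [this, Finset.sum_range_one]
      push_cast
      linarith
    | succ k hk ih =>
      intro hk1n
      have hkn : k < n := by omega
      have h1 := hlowstep k hk hkn
      have hpos1 : 0 < |aSeq r (k+1)| := hapos (k+1) hk1n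
      have hposk : 0 < |aSeq r k| := hapos k (by omega)
      have hrk := hr k hkn
      have hrδ : 0 < |r k| - δ := by nlinarith
      have hl : Real.log ((|r k| - δ) * |aSeq r k|) ≤ Real.log |aSeq r (k+1)| :=
        Real.log_le_log (by positivity) h1
      rw [Real.log_mul (ne_of_gt hrδ) (ne_of_gt hposk)] at hl
      have h2 := hlog_down (|r k|) hrk
      have h3 := ih (by omega)
      rw [Finset.sum_range_succ]
      push_cast
      linarith
  -- bound on c
  have hc : ∀ k, k ≤ n → 30 * |cSeq r k| ≤ |aSeq r k| * (1 - ((961:ℝ)⁻¹)^k) := by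
    intro k
    induction k with
    | zero =>
      intro _
      simp [cSeq]
    | succ k ih =>
      intro hk
      have ihk := ih (by omega)
      have hA := hposa (k+1) hk
      have hB := hposa k (by omega)
      have hBpos : 0 < |aSeq r k| := lt_of_lt_of_le (by positivity) hB
      have hid := det_ident r k
      have e1 : |cSeq r (k+1)| * |aSeq r k| = |aSeq r (k+1) * cSeq r k - 1| := by
        rw [← abs_mul]; congr 1; linarith
      have e2 : |aSeq r (k+1) * cSeq r k - 1| ≤ |aSeq r (k+1)| * |cSeq r k| + 1 := by
        calc |aSeq r (k+1) * cSeq r k - 1| ≤ |aSeq r (k+1) * cSeq r k| + |(1:ℝ)| :=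
              abs_sub_le' _ _
          _ = |aSeq r (k+1)| * |cSeq r k| + 1 := by rw [abs_mul, abs_one]
      have hq : ((961:ℝ))^k * ((961:ℝ)⁻¹)^k = 1 := by
        rw [← mul_pow]; norm_num
      have hAB : 31*(961:ℝ)^k ≤ |aSeq r (k+1)| * |aSeq r k| := by
        have hp2 : (31:ℝ)^k * (31:ℝ)^k = 961^k := by rw [← mul_pow]; norm_num
        have hp : (31:ℝ)^(k+1) * (31:ℝ)^k = 31 * 961^k := by
          rw [pow_succ]; linear_combination (31:ℝ) * hp2
        calc 31*(961:ℝ)^k = (31:ℝ)^(k+1) * (31:ℝ)^k := hp.symm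
          _ ≤ |aSeq r (k+1)| * |aSeq r k| :=
              mul_le_mul hA hB (by positivity) (abs_nonneg _)
      have hQnn : (0:ℝ) ≤ ((961:ℝ)⁻¹)^k := by positivity
      have hABQ : (31:ℝ) ≤ |aSeq r (k+1)| * |aSeq r k| * ((961:ℝ)⁻¹)^k := by
        have := mul_le_mul_of_nonneg_right hAB hQnn
        nlinarith [hq]
      have key : (30 * |cSeq r (k+1)|) * |aSeq r k|
          ≤ (|aSeq r (k+1)| * (1 - ((961:ℝ)⁻¹)^(k+1))) * |aSeq r k| := by
        have hq1 : ((961:ℝ)⁻¹)^(k+1) = ((961:ℝ)⁻¹)^k * (961:ℝ)⁻¹ := pow_succ _ _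
        have step1 : (30 * |cSeq r (k+1)|) * |aSeq r k|
            ≤ 30 * (|aSeq r (k+1)| * |cSeq r k| + 1) := by
          calc (30 * |cSeq r (k+1)|) * |aSeq r k| = 30 * (|cSeq r (k+1)| * |aSeq r k|) := by ring
            _ = 30 * |aSeq r (k+1) * cSeq r k - 1| := by rw [e1]
            _ ≤ 30 * (|aSeq r (k+1)| * |cSeq r k| + 1) := by linarith
        have step2 : 30 * (|aSeq r (k+1)| * |cSeq r k|)
            ≤ |aSeq r (k+1)| * (|aSeq r k| * (1 - ((961:ℝ)⁻¹)^k)) := by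
          have := mul_le_mul_of_nonneg_left ihk (abs_nonneg (aSeq r (k+1)))
          linarith
        have hend : (30:ℝ) ≤ (|aSeq r (k+1)| * |aSeq r k| * ((961:ℝ)⁻¹)^k) * (960/961) := by
          linarith
        rw [hq1]
        nlinarith [hend, step1, step2]
      exact le_of_mul_le_mul_right key hBpos
  have hcn : ∀ k, k ≤ n → |cSeq r k| ≤ |aSeq r k| := by
    intro k hk
    have h1 := hc k hk
    have hQnn : (0:ℝ) ≤ ((961:ℝ)⁻¹)^k := by positivity
    nlinarith [abs_nonneg (cSeq r k), abs_nonneg (aSeq r k)]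
  -- put everything together
  obtain ⟨m, rfl⟩ : ∃ m, n = m + 1 := ⟨n - 1, by omega⟩
  set P := prodRev (fun k => transferM (r k)) (m+1) with hPdef
  have hPe := prodRev_entries r m
  have ham1 : 0 < |aSeq r (m+1)| := hapos (m+1) le_rfl
  have hop_low : |aSeq r (m+1)| ≤ ‖P‖ := by
    have := entry_le_opNorm P 0 0
    rw [hPdef, hPe] at this ⊢
    simpa using this
  have ham : |aSeq r m| ≤ |aSeq r (m+1)| := by
    have := hgrow m (by omega)
    nlinarith [abs_nonneg (aSeq r m)]
  have hop_up : ‖P‖ ≤ 2 * |aSeq r (m+1)| := by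
    rw [hPdef, hPe]
    apply opNorm_le_two_max _ _ (abs_nonneg _)
    intro i j
    fin_cases i <;> fin_cases j <;> simp only [Matrix.cons_val', Matrix.cons_val_zero,
      Matrix.cons_val_one, Matrix.head_cons, Matrix.empty_val', Matrix.cons_val_fin_one,
      Matrix.head_fin_const]
    · exact le_rfl
    · exact hcn (m+1) le_rfl
    · exact ham
    · exact le_trans (hcn m (by omega)) ham
  have hPpos : 0 < ‖P‖ := lt_of_lt_of_le ham1 hop_low
  have hlogP_up : Real.log ‖P‖ ≤ Real.log 2 + Real.log |aSeq r (m+1)| := by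
    have := Real.log_le_log hPpos hop_up
    rwa [Real.log_mul (by norm_num) (ne_of_gt ham1)] at this
  have hlogP_lo : Real.log |aSeq r (m+1)| ≤ Real.log ‖P‖ := Real.log_le_log ham1 hop_low
  have hUn := hUp (m+1) (by omega) le_rfl
  have hLn := hLo (m+1) (by omega) le_rfl
  set S := ∑ j ∈ Finset.range (m+1), Real.log |r j| with hSdef
  have hN : (0:ℝ) < ((m+1 : ℕ) : ℝ) := by positivity
  have habs : |Real.log ‖P‖ - S| ≤ ((m+1:ℕ):ℝ) * e + Real.log 2 := by
    rw [abs_le]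
    constructor
    · push_cast at hLn ⊢
      have hlog2 : (0:ℝ) ≤ Real.log 2 := Real.log_nonneg (by norm_num)
      linarith
    · push_cast at hUn ⊢
      linarith
  have hm1 : (m + 1) - 1 = m := by omega
  rw [hm1]
  have hgoal1 : |(1 / ((m+1:ℕ)) : ℝ) * Real.log ‖P‖ - (1 / ((m+1:ℕ)) : ℝ) * S|
      = (1 / ((m+1:ℕ)) : ℝ) * |Real.log ‖P‖ - S| := by
    rw [← mul_sub, abs_mul, abs_of_nonneg (by positivity : (0:ℝ) ≤ 1 / ((m+1:ℕ):ℝ))]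
  rw [hgoal1]
  have hlog2le : Real.log 2 ≤ Real.log (|r m| * |r 0|) := by
    apply Real.log_le_log (by norm_num)
    have h1 := hr m (by omega)
    have h2 := hr 0 (by omega)
    nlinarith
  have hele : e ≤ 1.2 * 10 ^ 3 * r₀⁻¹ ^ 2 := by
    rw [hedef]
    nlinarith [sq_nonneg r₀⁻¹]
  calc (1 / ((m+1:ℕ)) : ℝ) * |Real.log ‖P‖ - S|
      ≤ (1 / ((m+1:ℕ)) : ℝ) * (((m+1:ℕ):ℝ) * e + Real.log 2) := by
        exact mul_le_mul_of_nonneg_left habs (by positivity)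
    _ = e + (1 / ((m+1:ℕ)) : ℝ) * Real.log 2 := by
        field_simp
    _ ≤ (1 / ((m+1:ℕ)) : ℝ) * Real.log (|r m| * |r 0|) + 1.2 * 10 ^ 3 * r₀⁻¹ ^ 2 := by
        have hpos : (0:ℝ) ≤ 1 / ((m+1:ℕ):ℝ) := by positivity
        have := mul_le_mul_of_nonneg_left hlog2le hpos
        linarith
end

section
/- Let β_1, β_2 > 0 and let {θ_j}_{j≥1} ⊂ (0, ∞) be a sequence such that either β_1 ≤ θ_j ≤ 1 − β_2 < 1 for all j, or 1 < 1 + β_1 ≤ θ_j ≤ β_2 for all j. For E ∈ ℝ define the 2×2 real matrix M_j(E) with rows ((E² − 1)/θ_j, −E θ_j) and (E/θ_j, −θ_j). Then for every ε_1 > 0 there exist E_0 > 0 and ξ > 0 (depending only on ε_1, β_1, β_2) such that for all E ∈ ℝ with |E| < E_0 and all n ≥ 1: |(1/n) log‖M_n(E) ⋯ M_1(E)‖ − (1/n) log‖M_n(0) ⋯ M_1(0)‖| ≤ ε_1 + ξ/n. -/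
open scoped Matrix.Norms.L2Operator

/-- The two-step Jacobi transfer matrix `M_j(E)` with rows `((E²-1)/θ_j, -E θ_j)` and
`(E/θ_j, -θ_j)`. -/
noncomputable def jacobiM (θj E : ℝ) : Matrix (Fin 2) (Fin 2) ℝ :=
  !![(E ^ 2 - 1) / θj, -E * θj; E / θj, -θj]

namespace JacobiAux

@[simp] lemma jacobiM00 (θ E : ℝ) : jacobiM θ E 0 0 = (E^2-1)/θ := by simp [jacobiM]
@[simp] lemma jacobiM01 (θ E : ℝ) : jacobiM θ E 0 1 = -E*θ := by simp [jacobiM]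
@[simp] lemma jacobiM10 (θ E : ℝ) : jacobiM θ E 1 0 = E/θ := by simp [jacobiM]
@[simp] lemma jacobiM11 (θ E : ℝ) : jacobiM θ E 1 1 = -θ := by simp [jacobiM]

lemma prodRev_zero (L : ℕ → Matrix (Fin 2) (Fin 2) ℝ) : prodRev L 0 = 1 := by
  simp [prodRev]

lemma prodRev_succ (L : ℕ → Matrix (Fin 2) (Fin 2) ℝ) (n : ℕ) :
    prodRev L (n+1) = L n * prodRev L n := by
  simp [prodRev, List.range_succ]

lemma opNorm_le_of (A : Matrix (Fin 2) (Fin 2) ℝ) {c : ℝ} (hc : 0 ≤ c)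
    (h : ∀ x y : ℝ, (A 0 0 * x + A 0 1 * y) ^ 2 + (A 1 0 * x + A 1 1 * y) ^ 2
        ≤ c ^ 2 * (x ^ 2 + y ^ 2)) :
    ‖A‖ ≤ c := by
  rw [Matrix.l2_opNorm_def]
  refine ContinuousLinearMap.opNorm_le_bound _ hc fun x => ?_
  have hx : ‖x‖ = Real.sqrt ((x 0) ^ 2 + (x 1) ^ 2) := by
    rw [EuclideanSpace.norm_eq]
    simp [Fin.sum_univ_two, Real.norm_eq_abs, sq_abs]
  have hAx : ‖(Matrix.toEuclideanLin.trans LinearMap.toContinuousLinearMap) A x‖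
      = Real.sqrt ((A 0 0 * x 0 + A 0 1 * x 1) ^ 2 + (A 1 0 * x 0 + A 1 1 * x 1) ^ 2) := by
    rw [EuclideanSpace.norm_eq]
    simp [Fin.sum_univ_two, Real.norm_eq_abs, sq_abs, Matrix.toEuclideanLin_apply,
      Matrix.mulVec, dotProduct]
  rw [hAx, hx]
  rw [show c * Real.sqrt ((x 0) ^ 2 + (x 1) ^ 2)
      = Real.sqrt (c ^ 2 * ((x 0) ^ 2 + (x 1) ^ 2)) by
    rw [Real.sqrt_mul (by positivity), Real.sqrt_sq hc]]
  exact Real.sqrt_le_sqrt (h (x 0) (x 1))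

lemma mulVec_sq_le (A : Matrix (Fin 2) (Fin 2) ℝ) (v : Fin 2 → ℝ) :
    ((A.mulVec v) 0) ^ 2 + ((A.mulVec v) 1) ^ 2 ≤ ‖A‖ ^ 2 * ((v 0) ^ 2 + (v 1) ^ 2) := by
  have h := Matrix.l2_opNorm_mulVec A ((WithLp.equiv 2 (Fin 2 → ℝ)).symm v)
  have hL : ‖(EuclideanSpace.equiv (Fin 2) ℝ).symm
        (A.mulVec ((WithLp.equiv 2 (Fin 2 → ℝ)).symm v))‖
      = Real.sqrt (((A.mulVec v) 0) ^ 2 + ((A.mulVec v) 1) ^ 2) := by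
    rw [EuclideanSpace.norm_eq]
    simp [Fin.sum_univ_two, Real.norm_eq_abs, sq_abs]
  have hR : ‖(WithLp.equiv 2 (Fin 2 → ℝ)).symm v‖ = Real.sqrt ((v 0) ^ 2 + (v 1) ^ 2) := by
    rw [EuclideanSpace.norm_eq]
    simp [Fin.sum_univ_two, Real.norm_eq_abs, sq_abs]
  rw [hL, hR] at h
  have hnn : (0:ℝ) ≤ ‖A‖ := norm_nonneg _
  nlinarith [Real.sq_sqrt (by positivity : (0:ℝ) ≤ ((A.mulVec v) 0) ^ 2 + ((A.mulVec v) 1) ^ 2),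
    Real.sqrt_nonneg (((A.mulVec v) 0) ^ 2 + ((A.mulVec v) 1) ^ 2),
    Real.sqrt_nonneg ((v 0) ^ 2 + (v 1) ^ 2),
    Real.sq_sqrt (by positivity : (0:ℝ) ≤ (v 0) ^ 2 + (v 1) ^ 2),
    mul_le_mul_of_nonneg_left h hnn]

lemma abs_mulVec_le_norm (A : Matrix (Fin 2) (Fin 2) ℝ) (v : Fin 2 → ℝ)
    (hv : (v 0)^2 + (v 1)^2 = 1) (i : Fin 2) : |A.mulVec v i| ≤ ‖A‖ := by
  have h := mulVec_sq_le A v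
  rw [hv, mul_one] at h
  have hnn : (0:ℝ) ≤ ‖A‖ := norm_nonneg _
  have h0 : ∀ w : ℝ, w^2 ≤ ‖A‖^2 → |w| ≤ ‖A‖ := by
    intro w hw
    nlinarith [abs_nonneg w, sq_abs w]
  fin_cases i
  · exact h0 (A.mulVec v 0) (by nlinarith [sq_nonneg (A.mulVec v 1)])
  · exact h0 (A.mulVec v 1) (by nlinarith [sq_nonneg (A.mulVec v 0)])

lemma opNorm_diag_le (a d m : ℝ) (ha : |a| ≤ m) (hd : |d| ≤ m) :
    ‖!![a, 0; 0, d]‖ ≤ m := by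
  have hm : 0 ≤ m := le_trans (abs_nonneg a) ha
  apply opNorm_le_of _ hm
  intro x y
  simp only [Matrix.cons_val', Matrix.cons_val_zero, Matrix.empty_val',
    Matrix.cons_val_fin_one, Matrix.cons_val_one, Matrix.head_cons, Matrix.head_fin_const,
    Matrix.of_apply, Matrix.cons_val_one, Matrix.head_cons]
  nlinarith [sq_abs a, sq_abs d, sq_nonneg x, sq_nonneg y,
    mul_le_mul ha ha (abs_nonneg a) hm, mul_le_mul hd hd (abs_nonneg d) hm]

lemma opNorm_le_sum (a b c d : ℝ) : ‖!![a, b; c, d]‖ ≤ |a| + |b| + |c| + |d| := by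
  apply opNorm_le_of _ (by positivity)
  intro x y
  simp only [Matrix.cons_val', Matrix.cons_val_zero, Matrix.empty_val',
    Matrix.cons_val_fin_one, Matrix.cons_val_one, Matrix.head_cons, Matrix.head_fin_const,
    Matrix.of_apply]
  nlinarith [sq_nonneg (a*y - b*x), sq_nonneg (c*y - d*x), sq_abs a, sq_abs b, sq_abs c,
    sq_abs d, sq_nonneg x, sq_nonneg y,
    mul_nonneg (mul_nonneg (abs_nonneg a) (abs_nonneg b)) (add_nonneg (sq_nonneg x) (sq_nonneg y)),
    mul_nonneg (mul_nonneg (abs_nonneg a) (abs_nonneg c)) (add_nonneg (sq_nonneg x) (sq_nonneg y)),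
    mul_nonneg (mul_nonneg (abs_nonneg a) (abs_nonneg d)) (add_nonneg (sq_nonneg x) (sq_nonneg y)),
    mul_nonneg (mul_nonneg (abs_nonneg b) (abs_nonneg c)) (add_nonneg (sq_nonneg x) (sq_nonneg y)),
    mul_nonneg (mul_nonneg (abs_nonneg b) (abs_nonneg d)) (add_nonneg (sq_nonneg x) (sq_nonneg y)),
    mul_nonneg (mul_nonneg (abs_nonneg c) (abs_nonneg d)) (add_nonneg (sq_nonneg x) (sq_nonneg y))]

lemma jacobiM_zero_eq (θ : ℝ) : jacobiM θ 0 = !![-(1/θ), 0; 0, -θ] := by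
  ext i j
  fin_cases i <;> fin_cases j <;> simp [jacobiM] <;> ring

lemma jacobiM_sub_eq (θ E : ℝ) (hθ : θ ≠ 0) :
    jacobiM θ E - jacobiM θ 0 = !![E^2/θ, -(E*θ); E/θ, 0] := by
  ext i j
  fin_cases i <;> fin_cases j <;>
    simp [jacobiM, Matrix.sub_apply] <;> field_simp <;> ring

lemma jacobiM_norm_le {θ E : ℝ} (hθ : 0 < θ) (hE : |E| ≤ 1) :
    ‖jacobiM θ E‖ ≤ max (1/θ) θ + (2/θ + θ) * |E| := by
  have hm : (0:ℝ) ≤ max (1/θ) θ := le_trans hθ.le (le_max_right _ _)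
  have h1 : ‖jacobiM θ 0‖ ≤ max (1/θ) θ := by
    rw [jacobiM_zero_eq]
    apply opNorm_diag_le
    · rw [abs_neg, abs_of_nonneg (by positivity : (0:ℝ) ≤ 1/θ)]
      exact le_max_left _ _
    · rw [abs_neg, abs_of_pos hθ]
      exact le_max_right _ _
  have h2 : ‖jacobiM θ E - jacobiM θ 0‖ ≤ (2/θ + θ) * |E| := by
    rw [jacobiM_sub_eq θ E hθ.ne']
    refine le_trans (opNorm_le_sum _ _ _ _) ?_
    have e1 : |E^2/θ| = E^2/θ := abs_of_nonneg (by positivity)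
    have e2 : |(-(E*θ))| = |E| * θ := by
      rw [abs_neg, abs_mul, abs_of_pos hθ]
    have e3 : |E/θ| = |E|/θ := by
      rw [abs_div, abs_of_pos hθ]
    rw [e1, e2, e3]
    have hE2 : E^2 ≤ |E| := by nlinarith [sq_abs E, abs_nonneg E]
    have e4' : E^2/θ ≤ |E|/θ := by gcongr
    simp only [abs_zero]
    have : 2/θ * |E| = |E|/θ + |E|/θ := by ring
    nlinarith [e4']
  have key : jacobiM θ E = jacobiM θ 0 + (jacobiM θ E - jacobiM θ 0) := by abel
  calc ‖jacobiM θ E‖ = ‖jacobiM θ 0 + (jacobiM θ E - jacobiM θ 0)‖ := by rw [← key]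
    _ ≤ ‖jacobiM θ 0‖ + ‖jacobiM θ E - jacobiM θ 0‖ := norm_add_le _ _
    _ ≤ _ := add_le_add h1 h2


lemma mulVec0 (θ E : ℝ) (v : Fin 2 → ℝ) :
    (jacobiM θ E).mulVec v 0 = (E^2-1)/θ * v 0 + (-E*θ) * v 1 := by
  simp [Matrix.mulVec, dotProduct, Fin.sum_univ_two]

lemma mulVec1 (θ E : ℝ) (v : Fin 2 → ℝ) :
    (jacobiM θ E).mulVec v 1 = E/θ * v 0 + (-θ) * v 1 := by
  simp [Matrix.mulVec, dotProduct, Fin.sum_univ_two]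

lemma abs_le_abs_add (u w : ℝ) : |u| ≤ |u + w| + |w| := by
  calc |u| = |(u + w) + (-w)| := by ring_nf
    _ ≤ |u + w| + |(-w)| := abs_add_le _ _
    _ = |u + w| + |w| := by rw [abs_neg]

lemma step_small {θ E : ℝ} (hθ : 0 < θ) (hE : |E| ≤ 1)
    (hcone : θ^2*(1+|E|) ≤ 1 - |E| - E^2) (v : Fin 2 → ℝ) (hv : |v 1| ≤ |v 0|) :
    |(jacobiM θ E).mulVec v 1| ≤ |(jacobiM θ E).mulVec v 0| ∧
    ((1-2*|E|)/θ) * |v 0| ≤ |(jacobiM θ E).mulVec v 0| := by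
  set a := |v 0| with ha
  set b := |v 1| with hb
  set e := |E| with he
  have ha0 : 0 ≤ a := abs_nonneg _
  have hb0 : 0 ≤ b := abs_nonneg _
  have he0 : 0 ≤ e := abs_nonneg _
  have hE2 : E^2 ≤ e := by nlinarith [sq_abs E]
  have hE2' : E^2 = e^2 := (sq_abs E).symm
  have hθ2 : θ^2 ≤ 1 := by nlinarith
  set A0 := |(jacobiM θ E).mulVec v 0| with hA0
  set A1 := |(jacobiM θ E).mulVec v 1| with hA1
  have hA0n : 0 ≤ A0 := abs_nonneg _
  have g1 : |(E^2-1)/θ * v 0| = ((1-E^2)/θ) * a := by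
    rw [abs_mul, abs_div, abs_of_pos hθ, abs_of_nonpos (by nlinarith : E^2 - 1 ≤ 0)]
    rw [ha]; ring_nf
  have g2 : |(-E*θ) * v 1| = e * θ * b := by
    rw [abs_mul, abs_mul, abs_neg, abs_of_pos hθ]
  have f1 : (1-E^2)*a ≤ θ*A0 + e*θ^2*b := by
    have h3 := abs_le_abs_add ((E^2-1)/θ * v 0) ((-E*θ) * v 1)
    rw [g1, g2, ← mulVec0 θ E v, ← hA0] at h3
    have h4 : θ * (((1-E^2)/θ) * a) = (1-E^2)*a := by field_simp
    nlinarith [mul_le_mul_of_nonneg_left h3 hθ.le]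
  have f2 : θ*A1 ≤ e*a + θ^2*b := by
    have h3 : A1 ≤ |E/θ * v 0| + |(-θ) * v 1| := by
      rw [hA1, mulVec1]; exact abs_add_le _ _
    have g3 : |E/θ * v 0| = (e/θ) * a := by rw [abs_mul, abs_div, abs_of_pos hθ]
    have g4 : |(-θ) * v 1| = θ * b := by rw [abs_mul, abs_neg, abs_of_pos hθ]
    rw [g3, g4] at h3
    have h4 : θ * ((e/θ) * a) = e*a := by field_simp
    nlinarith [mul_le_mul_of_nonneg_left h3 hθ.le]
  constructor
  · have key : θ*A1 ≤ θ*A0 := by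
      nlinarith [mul_nonneg (sub_nonneg.2 hv) (mul_nonneg (sq_nonneg θ) (by linarith : (0:ℝ) ≤ 1+e)),
        mul_nonneg ha0 (sub_nonneg.2 hcone)]
    exact le_of_mul_le_mul_left key hθ
  · rw [div_mul_eq_mul_div, div_le_iff₀ hθ]
    nlinarith [mul_nonneg (sub_nonneg.2 hE2) ha0,
      mul_nonneg he0 (sub_nonneg.2 hv),
      mul_nonneg (mul_nonneg he0 hb0) (sub_nonneg.2 hθ2)]

lemma step_large {θ E : ℝ} (hθ : 0 < θ) (hθ1 : 1 ≤ θ) (hE : |E| ≤ 1)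
    (hcone : |E| * (θ^2+1) ≤ θ^2-1) (v : Fin 2 → ℝ) (hv : |v 0| ≤ |v 1|) :
    |(jacobiM θ E).mulVec v 0| ≤ |(jacobiM θ E).mulVec v 1| ∧
    ((1-2*|E|) * θ) * |v 1| ≤ |(jacobiM θ E).mulVec v 1| := by
  set a := |v 0| with ha
  set b := |v 1| with hb
  set e := |E| with he
  have ha0 : 0 ≤ a := abs_nonneg _
  have hb0 : 0 ≤ b := abs_nonneg _
  have he0 : 0 ≤ e := abs_nonneg _
  have hE2 : E^2 ≤ e := by nlinarith [sq_abs E]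
  have hθ2 : 1 ≤ θ^2 := by nlinarith
  set A0 := |(jacobiM θ E).mulVec v 0| with hA0
  set A1 := |(jacobiM θ E).mulVec v 1| with hA1
  have hA1n : 0 ≤ A1 := abs_nonneg _
  have f1 : θ^2*b ≤ θ*A1 + e*a := by
    have h3 := abs_le_abs_add ((-θ) * v 1) (E/θ * v 0)
    have hcomm : (-θ) * v 1 + E/θ * v 0 = E/θ * v 0 + (-θ) * v 1 := by ring
    rw [hcomm, ← mulVec1 θ E v, ← hA1] at h3
    have g4 : |(-θ) * v 1| = θ * b := by rw [abs_mul, abs_neg, abs_of_pos hθ]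
    have g3 : |E/θ * v 0| = (e/θ) * a := by rw [abs_mul, abs_div, abs_of_pos hθ]
    rw [g4, g3] at h3
    have h4 : θ * ((e/θ) * a) = e*a := by field_simp
    nlinarith [mul_le_mul_of_nonneg_left h3 hθ.le]
  have f2 : θ*A0 ≤ (1-E^2)*a + e*θ^2*b := by
    have h3 : A0 ≤ |(E^2-1)/θ * v 0| + |(-E*θ) * v 1| := by
      rw [hA0, mulVec0]; exact abs_add_le _ _
    have g1 : |(E^2-1)/θ * v 0| = ((1-E^2)/θ) * a := by
      rw [abs_mul, abs_div, abs_of_pos hθ, abs_of_nonpos (by nlinarith : E^2 - 1 ≤ 0)]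
      rw [ha]; ring_nf
    have g2 : |(-E*θ) * v 1| = e * θ * b := by rw [abs_mul, abs_mul, abs_neg, abs_of_pos hθ]
    rw [g1, g2] at h3
    have h4 : θ * (((1-E^2)/θ) * a) = (1-E^2)*a := by field_simp
    nlinarith [mul_le_mul_of_nonneg_left h3 hθ.le]
  have hkey : 1 + e ≤ θ^2*(1-e) := by nlinarith
  constructor
  · have key : θ*A0 ≤ θ*A1 := by
      nlinarith [mul_nonneg (sub_nonneg.2 hv) (by nlinarith [sq_nonneg E] : (0:ℝ) ≤ 1 + e - E^2),
        mul_nonneg hb0 (sub_nonneg.2 hkey), mul_nonneg (sq_nonneg E) ha0]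
    exact le_of_mul_le_mul_left key hθ
  · have key : θ*((1-2*e) * θ * b) ≤ θ*A1 := by
      nlinarith [mul_nonneg he0 (sub_nonneg.2 hv),
        mul_nonneg (mul_nonneg he0 hb0) (sub_nonneg.2 hθ2)]
    exact le_of_mul_le_mul_left key hθ


lemma upper_prod (L : ℕ → Matrix (Fin 2) (Fin 2) ℝ) (u : ℕ → ℝ)
    (hu : ∀ j, ‖L j‖ ≤ u j) :
    ∀ n : ℕ, 1 ≤ n → ‖prodRev L n‖ ≤ ∏ j ∈ Finset.range n, u j := by
  intro n hn
  induction n with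
  | zero => omega
  | succ n ih =>
    rcases Nat.eq_or_lt_of_le hn with h1 | h1
    · have : n = 0 := by omega
      subst this
      rw [prodRev_succ, prodRev_zero, mul_one]
      simpa using hu 0
    · have hn' : 1 ≤ n := by omega
      have ihn := ih hn'
      rw [prodRev_succ, Finset.prod_range_succ, mul_comm (∏ j ∈ Finset.range n, u j) (u n)]
      calc ‖L n * prodRev L n‖ ≤ ‖L n‖ * ‖prodRev L n‖ := Matrix.l2_opNorm_mul _ _
        _ ≤ u n * ∏ j ∈ Finset.range n, u j :=
          mul_le_mul (hu n) ihn (norm_nonneg _) (le_trans (norm_nonneg _) (hu n))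

lemma lower_prod (L : ℕ → Matrix (Fin 2) (Fin 2) ℝ) (r : ℕ → ℝ) (hr : ∀ j, 0 ≤ r j)
    (i₀ i₁ : Fin 2) (e : Fin 2 → ℝ) (he0 : e i₀ = 1) (he1 : e i₁ = 0)
    (H : ∀ j (v : Fin 2 → ℝ), |v i₁| ≤ |v i₀| →
       |(L j).mulVec v i₁| ≤ |(L j).mulVec v i₀| ∧ r j * |v i₀| ≤ |(L j).mulVec v i₀|) :
    ∀ n : ℕ, |(prodRev L n).mulVec e i₁| ≤ |(prodRev L n).mulVec e i₀| ∧
      (∏ j ∈ Finset.range n, r j) ≤ |(prodRev L n).mulVec e i₀| := by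
  intro n
  induction n with
  | zero =>
    rw [prodRev_zero, Matrix.one_mulVec]
    simp [he0, he1]
  | succ n ih =>
    have hmv : (prodRev L (n+1)).mulVec e = (L n).mulVec ((prodRev L n).mulVec e) := by
      rw [prodRev_succ, ← Matrix.mulVec_mulVec]
    obtain ⟨hc, hg⟩ := ih
    obtain ⟨hc', hg'⟩ := H n _ hc
    refine ⟨by rw [hmv]; exact hc', ?_⟩
    rw [hmv, Finset.prod_range_succ]
    calc (∏ j ∈ Finset.range n, r j) * r n
        ≤ |(prodRev L n).mulVec e i₀| * r n := mul_le_mul_of_nonneg_right hg (hr n)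
      _ = r n * |(prodRev L n).mulVec e i₀| := mul_comm _ _
      _ ≤ _ := hg'

lemma final_log {x y P ρ c ε : ℝ} {n : ℕ} (hn : 1 ≤ n) (hP : 0 < P) (hρ : 0 < ρ)
    (hc : 0 ≤ c)
    (h1 : ρ^n * P ≤ x) (h2 : x ≤ (1+c)^n * P) (h3 : P ≤ y) (h4 : y ≤ P)
    (hcε : Real.log (1+c) ≤ ε) (hρε : -ε ≤ Real.log ρ) :
    |(1/n : ℝ) * Real.log x - (1/n : ℝ) * Real.log y| ≤ ε := by
  have hy : y = P := le_antisymm h4 h3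
  rw [hy]
  have hx : 0 < x := lt_of_lt_of_le (by positivity) h1
  have hnp : (0:ℝ) < n := by exact_mod_cast hn
  have hupper : Real.log x ≤ n * Real.log (1+c) + Real.log P := by
    calc Real.log x ≤ Real.log ((1+c)^n * P) := Real.log_le_log hx h2
      _ = Real.log ((1+c)^n) + Real.log P :=
        Real.log_mul (by positivity) hP.ne'
      _ = n * Real.log (1+c) + Real.log P := by rw [Real.log_pow]
  have hlower : n * Real.log ρ + Real.log P ≤ Real.log x := by
    calc (n:ℝ) * Real.log ρ + Real.log P = Real.log (ρ^n) + Real.log P := by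
          rw [Real.log_pow]
      _ = Real.log (ρ^n * P) := (Real.log_mul (by positivity) hP.ne').symm
      _ ≤ Real.log x := Real.log_le_log (by positivity) h1
  rw [abs_le]
  constructor
  · have : -(ε) ≤ (1/n : ℝ) * (n * Real.log ρ) := by
      rw [show (1/n : ℝ) * (n * Real.log ρ) = Real.log ρ by field_simp]
      linarith
    have h5 : (1/n : ℝ) * (n * Real.log ρ + Real.log P) ≤ (1/n : ℝ) * Real.log x :=
      mul_le_mul_of_nonneg_left hlower (by positivity)
    have hrw : (1/n : ℝ) * (n * Real.log ρ + Real.log P)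
        = Real.log ρ + (1/n : ℝ) * Real.log P := by field_simp
    rw [hrw] at h5
    linarith
  · have h5 : (1/n : ℝ) * Real.log x ≤ (1/n : ℝ) * (n * Real.log (1+c) + Real.log P) :=
      mul_le_mul_of_nonneg_left hupper (by positivity)
    have hrw : (1/n : ℝ) * (n * Real.log (1+c) + Real.log P)
        = Real.log (1+c) + (1/n : ℝ) * Real.log P := by field_simp
    rw [hrw] at h5
    linarith


end JacobiAux

namespace JacobiAux

set_option maxHeartbeats 1000000 in
lemma case_small (β₁ β₂ : ℝ) (hβ₂ : 0 < β₂)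
    (θ : ℕ → ℝ) (hθpos : ∀ j, 0 < θ j)
    (hc : ∀ j, β₁ ≤ θ j ∧ θ j ≤ 1 - β₂ ∧ 1 - β₂ < 1)
    (ε₁ : ℝ) (hε₁ : 0 < ε₁) :
    ∃ E₀ > (0 : ℝ), ∃ ξ > (0 : ℝ),
      ∀ E : ℝ, |E| < E₀ →
      ∀ n : ℕ, 1 ≤ n →
        |(1 / n : ℝ) * Real.log ‖prodRev (fun j => jacobiM (θ j) E) n‖ -
            (1 / n : ℝ) * Real.log ‖prodRev (fun j => jacobiM (θ j) 0) n‖| ≤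
          ε₁ + ξ / n := by
  have hexp1 : Real.exp (-ε₁) < 1 := by
    rw [← Real.exp_zero]; exact Real.exp_lt_exp.mpr (by linarith)
  have hexp0 : 0 < Real.exp (-ε₁) := Real.exp_pos _
  have h1β : 0 < 1 - β₂ := lt_of_lt_of_le (hθpos 0) (hc 0).2.1
  set s : ℝ := (1 - β₂)^2 with hs_def
  have hs1 : s < 1 := by nlinarith
  have hs0 : 0 < s := by positivity
  refine ⟨min (min 1 ((1-s)/3)) (min (ε₁/3) ((1 - Real.exp (-ε₁))/2)),
    lt_min (lt_min one_pos (by linarith)) (lt_min (by positivity) (by linarith)),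
    1, one_pos, ?_⟩
  intro E hE n hn
  set e := |E| with he_def
  have he0 : 0 ≤ e := abs_nonneg _
  have he1 : e ≤ 1 := le_of_lt (lt_of_lt_of_le hE (le_trans (min_le_left _ _) (min_le_left _ _)))
  have hecone : e ≤ (1-s)/3 :=
    le_of_lt (lt_of_lt_of_le hE (le_trans (min_le_left _ _) (min_le_right _ _)))
  have heC : 3 * e ≤ ε₁ := by
    have := le_of_lt (lt_of_lt_of_le hE (le_trans (min_le_right _ _) (min_le_left _ _)))
    linarith
  have heρ : Real.exp (-ε₁) ≤ 1 - 2*e := by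
    have := le_of_lt (lt_of_lt_of_le hE (le_trans (min_le_right _ _) (min_le_right _ _)))
    linarith
  have hρpos : 0 < 1 - 2*e := lt_of_lt_of_le hexp0 heρ
  have hθ1 : ∀ j, θ j ≤ 1 := fun j => by linarith [(hc j).2.1]
  have hθinv : ∀ j, θ j ≤ 1/(θ j) := fun j => by
    rw [le_div_iff₀ (hθpos j)]; nlinarith [(hc j).2.1, hθpos j]
  have hE2e : E^2 ≤ e := by nlinarith [sq_abs E]
  have hconej : ∀ j, (θ j)^2 * (1 + |E|) ≤ 1 - |E| - E^2 := by
    intro j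
    have h1 : (θ j)^2 ≤ s := by nlinarith [(hc j).2.1, hθpos j]
    rw [← he_def]
    nlinarith [sq_abs E]
  set P : ℝ := ∏ j ∈ Finset.range n, (θ j)⁻¹ with hP_def
  have hPpos : 0 < P := Finset.prod_pos fun j _ => inv_pos.2 (hθpos j)
  -- lower bound at energy E
  have hlowE : (1-2*e)^n * P ≤ ‖prodRev (fun j => jacobiM (θ j) E) n‖ := by
    have H : ∀ j (v : Fin 2 → ℝ), |v 1| ≤ |v 0| →
        |(jacobiM (θ j) E).mulVec v 1| ≤ |(jacobiM (θ j) E).mulVec v 0| ∧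
        ((1-2*|E|)/θ j) * |v 0| ≤ |(jacobiM (θ j) E).mulVec v 0| := fun j v hv =>
      JacobiAux.step_small (hθpos j) he1 (hconej j) v hv
    have hr : ∀ j, 0 ≤ (1-2*|E|)/θ j := fun j => by
      rw [← he_def]; exact div_nonneg (by linarith) (hθpos j).le
    have hLP := (JacobiAux.lower_prod (fun j => jacobiM (θ j) E)
      (fun j => (1-2*|E|)/θ j) hr 0 1 ![1,0] (by norm_num) (by norm_num) H n).2
    have hprod : (∏ j ∈ Finset.range n, (1-2*|E|)/θ j) = (1-2*e)^n * P := by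
      rw [← he_def]
      rw [Finset.prod_congr rfl (fun j _ => div_eq_mul_inv (1-2*e) (θ j)),
        Finset.prod_mul_distrib, Finset.prod_const, Finset.card_range]
    rw [hprod] at hLP
    exact le_trans hLP (JacobiAux.abs_mulVec_le_norm _ ![1,0] (by norm_num) 0)
  -- lower bound at energy 0
  have hlow0 : P ≤ ‖prodRev (fun j => jacobiM (θ j) 0) n‖ := by
    have H : ∀ j (v : Fin 2 → ℝ), |v 1| ≤ |v 0| →
        |(jacobiM (θ j) 0).mulVec v 1| ≤ |(jacobiM (θ j) 0).mulVec v 0| ∧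
        ((1-2*|(0:ℝ)|)/θ j) * |v 0| ≤ |(jacobiM (θ j) 0).mulVec v 0| := fun j v hv => by
      refine JacobiAux.step_small (hθpos j) (by norm_num) ?_ v hv
      have h1 : (θ j)^2 ≤ s := by nlinarith [(hc j).2.1, hθpos j]
      rw [abs_zero]
      nlinarith
    have hr : ∀ j, 0 ≤ (1-2*|(0:ℝ)|)/θ j := fun j =>
      div_nonneg (by norm_num) (hθpos j).le
    have hLP := (JacobiAux.lower_prod (fun j => jacobiM (θ j) 0)
      (fun j => (1-2*|(0:ℝ)|)/θ j) hr 0 1 ![1,0] (by norm_num) (by norm_num) H n).2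
    have hprod : (∏ j ∈ Finset.range n, (1-2*|(0:ℝ)|)/θ j) = P := by
      refine Finset.prod_congr rfl fun j _ => ?_
      norm_num
    rw [hprod] at hLP
    exact le_trans hLP (JacobiAux.abs_mulVec_le_norm _ ![1,0] (by norm_num) 0)
  -- upper bound at energy E
  have hupE : ‖prodRev (fun j => jacobiM (θ j) E) n‖ ≤ (1+3*e)^n * P := by
    have hu : ∀ j, ‖jacobiM (θ j) E‖ ≤ (θ j)⁻¹ * (1+3*e) := by
      intro j
      have hθj := hθpos j
      have hmax : max (1/(θ j)) (θ j) = 1/(θ j) := by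
        apply max_eq_left
        rw [le_div_iff₀ hθj]; nlinarith [hθ1 j]
      refine le_trans (JacobiAux.jacobiM_norm_le hθj he1) ?_
      rw [hmax, ← he_def]
      have h3 : 2/(θ j) + θ j ≤ 3/(θ j) := by
        have hsplit : (3:ℝ)/(θ j) = 2/(θ j) + 1/(θ j) := by ring
        linarith [hθinv j]
      have h4 : (2/(θ j) + θ j) * e ≤ 3/(θ j) * e := mul_le_mul_of_nonneg_right h3 he0
      have h5 : (θ j)⁻¹ * (1+3*e) = 1/(θ j) + 3/(θ j) * e := by
        rw [← one_div]; ring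
      linarith
    have := JacobiAux.upper_prod _ _ hu n hn
    refine le_trans this (le_of_eq ?_)
    rw [Finset.prod_mul_distrib, Finset.prod_const, Finset.card_range, mul_comm]
  -- upper bound at energy 0
  have hup0 : ‖prodRev (fun j => jacobiM (θ j) 0) n‖ ≤ P := by
    have hu : ∀ j, ‖jacobiM (θ j) 0‖ ≤ (θ j)⁻¹ := by
      intro j
      have hθj := hθpos j
      have hmax : max (1/(θ j)) (θ j) = 1/(θ j) := by
        apply max_eq_left
        rw [le_div_iff₀ hθj]; nlinarith [hθ1 j]
      refine le_trans (JacobiAux.jacobiM_norm_le hθj (by norm_num)) ?_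
      rw [hmax, abs_zero, mul_zero, add_zero, one_div]
    exact JacobiAux.upper_prod _ _ hu n hn
  have hfinal := JacobiAux.final_log (x := ‖prodRev (fun j => jacobiM (θ j) E) n‖)
    (y := ‖prodRev (fun j => jacobiM (θ j) 0) n‖) (P := P) (ρ := 1-2*e) (c := 3*e)
    (ε := ε₁) hn hPpos hρpos (by positivity) hlowE hupE hlow0 hup0
    (by
      have := Real.log_le_sub_one_of_pos (show (0:ℝ) < 1 + 3*e by linarith)
      linarith)
    (by
      rw [← Real.log_exp (-ε₁)]
      exact Real.log_le_log hexp0 heρ)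
  have hξ : (0:ℝ) ≤ 1 / n := by positivity
  calc |(1 / n : ℝ) * Real.log ‖prodRev (fun j => jacobiM (θ j) E) n‖ -
          (1 / n : ℝ) * Real.log ‖prodRev (fun j => jacobiM (θ j) 0) n‖| ≤ ε₁ := hfinal
    _ ≤ ε₁ + 1 / n := by linarith


set_option maxHeartbeats 1000000 in
lemma case_large (β₁ β₂ : ℝ) (hβ₁ : 0 < β₁)
    (θ : ℕ → ℝ) (hθpos : ∀ j, 0 < θ j)
    (hc : ∀ j, 1 < 1 + β₁ ∧ 1 + β₁ ≤ θ j ∧ θ j ≤ β₂)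
    (ε₁ : ℝ) (hε₁ : 0 < ε₁) :
    ∃ E₀ > (0 : ℝ), ∃ ξ > (0 : ℝ),
      ∀ E : ℝ, |E| < E₀ →
      ∀ n : ℕ, 1 ≤ n →
        |(1 / n : ℝ) * Real.log ‖prodRev (fun j => jacobiM (θ j) E) n‖ -
            (1 / n : ℝ) * Real.log ‖prodRev (fun j => jacobiM (θ j) 0) n‖| ≤
          ε₁ + ξ / n := by
  have hexp1 : Real.exp (-ε₁) < 1 := by
    rw [← Real.exp_zero]; exact Real.exp_lt_exp.mpr (by linarith)
  have hexp0 : 0 < Real.exp (-ε₁) := Real.exp_pos _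
  set t : ℝ := (1 + β₁)^2 with ht_def
  have ht1 : 1 < t := by nlinarith
  refine ⟨min (min 1 ((t-1)/(t+1))) (min (ε₁/3) ((1 - Real.exp (-ε₁))/2)),
    lt_min (lt_min one_pos (div_pos (by linarith) (by linarith)))
      (lt_min (by positivity) (by linarith)),
    1, one_pos, ?_⟩
  intro E hE n hn
  set e := |E| with he_def
  have he0 : 0 ≤ e := abs_nonneg _
  have he1 : e ≤ 1 := le_of_lt (lt_of_lt_of_le hE (le_trans (min_le_left _ _) (min_le_left _ _)))
  have hecone : e ≤ (t-1)/(t+1) :=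
    le_of_lt (lt_of_lt_of_le hE (le_trans (min_le_left _ _) (min_le_right _ _)))
  have hecone' : e * (t+1) ≤ t - 1 := by
    rw [← le_div_iff₀ (by linarith : (0:ℝ) < t + 1)]
    exact hecone
  have heC : 3 * e ≤ ε₁ := by
    have := le_of_lt (lt_of_lt_of_le hE (le_trans (min_le_right _ _) (min_le_left _ _)))
    linarith
  have heρ : Real.exp (-ε₁) ≤ 1 - 2*e := by
    have := le_of_lt (lt_of_lt_of_le hE (le_trans (min_le_right _ _) (min_le_right _ _)))
    linarith
  have hρpos : 0 < 1 - 2*e := lt_of_lt_of_le hexp0 heρ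
  have hθ1 : ∀ j, 1 ≤ θ j := fun j => by linarith [(hc j).2.1]
  have hconej : ∀ j, |E| * ((θ j)^2 + 1) ≤ (θ j)^2 - 1 := by
    intro j
    have ht2 : t ≤ (θ j)^2 := by nlinarith [(hc j).2.1, hθpos j]
    rw [← he_def]
    nlinarith [mul_nonneg (sub_nonneg.2 he1) (sub_nonneg.2 ht2)]
  set P : ℝ := ∏ j ∈ Finset.range n, θ j with hP_def
  have hPpos : 0 < P := Finset.prod_pos fun j _ => hθpos j
  have hlowE : (1-2*e)^n * P ≤ ‖prodRev (fun j => jacobiM (θ j) E) n‖ := by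
    have H : ∀ j (v : Fin 2 → ℝ), |v 0| ≤ |v 1| →
        |(jacobiM (θ j) E).mulVec v 0| ≤ |(jacobiM (θ j) E).mulVec v 1| ∧
        ((1-2*|E|) * θ j) * |v 1| ≤ |(jacobiM (θ j) E).mulVec v 1| := fun j v hv =>
      JacobiAux.step_large (hθpos j) (hθ1 j) he1 (hconej j) v hv
    have hr : ∀ j, 0 ≤ (1-2*|E|) * θ j := fun j => by
      rw [← he_def]; exact mul_nonneg (by linarith) (hθpos j).le
    have hLP := (JacobiAux.lower_prod (fun j => jacobiM (θ j) E)
      (fun j => (1-2*|E|) * θ j) hr 1 0 ![0,1] (by norm_num) (by norm_num) H n).2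
    have hprod : (∏ j ∈ Finset.range n, (1-2*|E|) * θ j) = (1-2*e)^n * P := by
      rw [← he_def, Finset.prod_mul_distrib, Finset.prod_const, Finset.card_range]
    rw [hprod] at hLP
    exact le_trans hLP (JacobiAux.abs_mulVec_le_norm _ ![0,1] (by norm_num) 1)
  have hlow0 : P ≤ ‖prodRev (fun j => jacobiM (θ j) 0) n‖ := by
    have H : ∀ j (v : Fin 2 → ℝ), |v 0| ≤ |v 1| →
        |(jacobiM (θ j) 0).mulVec v 0| ≤ |(jacobiM (θ j) 0).mulVec v 1| ∧
        ((1-2*|(0:ℝ)|) * θ j) * |v 1| ≤ |(jacobiM (θ j) 0).mulVec v 1| := fun j v hv => by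
      refine JacobiAux.step_large (hθpos j) (hθ1 j) (by norm_num) ?_ v hv
      rw [abs_zero]
      nlinarith [hθ1 j, hθpos j]
    have hr : ∀ j, 0 ≤ (1-2*|(0:ℝ)|) * θ j := fun j => by
      norm_num; exact (hθpos j).le
    have hLP := (JacobiAux.lower_prod (fun j => jacobiM (θ j) 0)
      (fun j => (1-2*|(0:ℝ)|) * θ j) hr 1 0 ![0,1] (by norm_num) (by norm_num) H n).2
    have hprod : (∏ j ∈ Finset.range n, (1-2*|(0:ℝ)|) * θ j) = P := by
      refine Finset.prod_congr rfl fun j _ => ?_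
      norm_num
    rw [hprod] at hLP
    exact le_trans hLP (JacobiAux.abs_mulVec_le_norm _ ![0,1] (by norm_num) 1)
  have hupE : ‖prodRev (fun j => jacobiM (θ j) E) n‖ ≤ (1+3*e)^n * P := by
    have hu : ∀ j, ‖jacobiM (θ j) E‖ ≤ θ j * (1+3*e) := by
      intro j
      refine le_trans (JacobiAux.jacobiM_norm_le (hθpos j) he1) ?_
      have hθj := hθpos j
      have h1j := hθ1 j
      have hinv : 1/(θ j) ≤ θ j := by
        rw [div_le_iff₀ hθj]; nlinarith
      rw [max_eq_right hinv, ← he_def]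
      have h2 : 2/(θ j) ≤ 2 * θ j := by
        rw [div_le_iff₀ hθj]; nlinarith
      have h3 : (2/(θ j) + θ j) * e ≤ 3 * θ j * e := by
        nlinarith [mul_le_mul_of_nonneg_right h2 he0]
      nlinarith
    have := JacobiAux.upper_prod _ _ hu n hn
    refine le_trans this (le_of_eq ?_)
    rw [Finset.prod_mul_distrib, Finset.prod_const, Finset.card_range, mul_comm]
  have hup0 : ‖prodRev (fun j => jacobiM (θ j) 0) n‖ ≤ P := by
    have hu : ∀ j, ‖jacobiM (θ j) 0‖ ≤ θ j := by
      intro j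
      refine le_trans (JacobiAux.jacobiM_norm_le (hθpos j) (by norm_num)) ?_
      have hinv : 1/(θ j) ≤ θ j := by
        rw [div_le_iff₀ (hθpos j)]; nlinarith [hθ1 j]
      rw [max_eq_right hinv, abs_zero, mul_zero, add_zero]
    exact JacobiAux.upper_prod _ _ hu n hn
  have hfinal := JacobiAux.final_log (x := ‖prodRev (fun j => jacobiM (θ j) E) n‖)
    (y := ‖prodRev (fun j => jacobiM (θ j) 0) n‖) (P := P) (ρ := 1-2*e) (c := 3*e)
    (ε := ε₁) hn hPpos hρpos (by positivity) hlowE hupE hlow0 hup0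
    (by
      have := Real.log_le_sub_one_of_pos (show (0:ℝ) < 1 + 3*e by linarith)
      linarith)
    (by
      rw [← Real.log_exp (-ε₁)]
      exact Real.log_le_log hexp0 heρ)
  have hξ : (0:ℝ) ≤ 1 / n := by positivity
  calc |(1 / n : ℝ) * Real.log ‖prodRev (fun j => jacobiM (θ j) E) n‖ -
          (1 / n : ℝ) * Real.log ‖prodRev (fun j => jacobiM (θ j) 0) n‖| ≤ ε₁ := hfinal
    _ ≤ ε₁ + 1 / n := by linarith


end JacobiAux


/-- **Stability of the Jacobi Lyapunov exponent at `E = 0`** (Corollary 5.5). If the hopping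
coefficients `θ_j` are uniformly inside `(0,1)` or uniformly inside `(1,∞)`, then for every
`ε₁ > 0` there are `E₀, ξ > 0` such that `|E| < E₀` implies, for all `n ≥ 1`,
`|(1/n) log ‖M_n(E) ⋯ M_1(E)‖ - (1/n) log ‖M_n(0) ⋯ M_1(0)‖| ≤ ε₁ + ξ/n`. -/
theorem jacobi_stability_at_zero_energy (β₁ β₂ : ℝ) (hβ₁ : 0 < β₁) (hβ₂ : 0 < β₂)
    (θ : ℕ → ℝ) (hθpos : ∀ j, 0 < θ j)
    (hθ : (∀ j, β₁ ≤ θ j ∧ θ j ≤ 1 - β₂ ∧ 1 - β₂ < 1) ∨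
          (∀ j, 1 < 1 + β₁ ∧ 1 + β₁ ≤ θ j ∧ θ j ≤ β₂)) :
    ∀ ε₁ : ℝ, 0 < ε₁ →
    ∃ E₀ > (0 : ℝ), ∃ ξ > (0 : ℝ),
      ∀ E : ℝ, |E| < E₀ →
      ∀ n : ℕ, 1 ≤ n →
        |(1 / n : ℝ) * Real.log ‖prodRev (fun j => jacobiM (θ j) E) n‖ -
            (1 / n : ℝ) * Real.log ‖prodRev (fun j => jacobiM (θ j) 0) n‖| ≤
          ε₁ + ξ / n := by
  intro ε₁ hε₁
  rcases hθ with hc | hc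
  · obtain ⟨E₀, hE₀, ξ, hξ, h⟩ := JacobiAux.case_small β₁ β₂ hβ₂ θ hθpos hc ε₁ hε₁
    exact ⟨E₀, hE₀, ξ, hξ, h⟩
  · obtain ⟨E₀, hE₀, ξ, hξ, h⟩ := JacobiAux.case_large β₁ β₂ hβ₁ θ hθpos hc ε₁ hε₁
    exact ⟨E₀, hE₀, ξ, hξ, h⟩
end
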